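/- Let w = mq be an abundant number, where m is deficient, q is prime, q does not divide m, and q ≥ σ(p^α) − 1 for every prime power p^α exactly dividing m (i.e., p^α ∣ m and p^(α+1) ∤ m). Then w is a primitive abundant number, i.e., w is abundant and every proper divisor of w is deficient. -/

import Mathlib

/-- `sigma' n` is the sum of all divisors of `n` (including `n`). -/
def sigma' (n : ℕ) : ℕ := ∑ d ∈ n.divisors, d

/-- A natural number is abundant if `σ(n) > 2n`. -/
def Abundant (n : ℕ) : Prop := 2 * n < sigma' n

/-- A natural number is deficient if `σ(n) < 2n`. -/
def Deficient (n : ℕ) : Prop := sigma' n < 2 * n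

/-- A natural number is semiperfect if it is the sum of some set of
its distinct proper divisors. -/
def Semiperfect (n : ℕ) : Prop := ∃ S ⊆ n.properDivisors, ∑ d ∈ S, d = n

/-- A natural number is weird if it is abundant but not semiperfect. -/
def Weird (n : ℕ) : Prop := Abundant n ∧ ¬ Semiperfect n

lemma sigma'_mul {a b : ℕ} (h : a.Coprime b) : sigma' (a * b) = sigma' a * sigma' b :=
  Nat.Coprime.sum_divisors_mul h

lemma sigma'_prime {p : ℕ} (hp : p.Prime) : sigma' p = p + 1 := by
  rw [sigma', hp.divisors, Finset.sum_pair hp.one_lt.ne]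
  omega

lemma sigma'_prime_pow {p : ℕ} (hp : p.Prime) (k : ℕ) :
    sigma' (p ^ k) = ∑ i ∈ Finset.range (k + 1), p ^ i := by
  rw [sigma', Nat.sum_divisors_prime_pow hp]

lemma sigma'_prime_pow_succ {p : ℕ} (hp : p.Prime) (k : ℕ) :
    sigma' (p ^ (k + 1)) = p * sigma' (p ^ k) + 1 := by
  rw [sigma'_prime_pow hp, sigma'_prime_pow hp, Finset.sum_range_succ',
    Finset.mul_sum]
  simp [pow_succ, mul_comm]

lemma sigma'_dvd_mono {d n : ℕ} (hdn : d ∣ n) (hn : n ≠ 0) :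
    sigma' d * n ≤ sigma' n * d := by
  obtain ⟨k, rfl⟩ := hdn
  have hd : d ≠ 0 := by rintro rfl; simp at hn
  have hk : k ≠ 0 := by rintro rfl; simp at hn
  have key : sigma' d * k ≤ sigma' (d * k) := by
    have himg : (d.divisors).image (· * k) ⊆ (d * k).divisors := by
      intro x hx
      simp only [Finset.mem_image] at hx
      obtain ⟨e, he, rfl⟩ := hx
      rw [Nat.mem_divisors] at he ⊢
      exact ⟨mul_dvd_mul he.1 dvd_rfl, mul_ne_zero hd hk⟩
    calc sigma' d * k = ∑ e ∈ d.divisors, e * k := by rw [sigma', Finset.sum_mul]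
      _ = ∑ x ∈ (d.divisors).image (· * k), x := by
          rw [Finset.sum_image]
          intro a _ b _ hab
          exact Nat.eq_of_mul_eq_mul_right (Nat.pos_of_ne_zero hk) hab
      _ ≤ sigma' (d * k) := Finset.sum_le_sum_of_subset himg
  calc sigma' d * (d * k) = sigma' d * k * d := by ring
    _ ≤ sigma' (d * k) * d := Nat.mul_le_mul_right _ key

lemma deficient_of_dvd {d n : ℕ} (hdn : d ∣ n) (hn : Deficient n) : Deficient d := by
  have hn0 : n ≠ 0 := by rintro rfl; simp [Deficient, sigma'] at hn
  have h1 := sigma'_dvd_mono hdn hn0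
  have h2 : sigma' n * d < 2 * n * d := by
    have hd0 : d ≠ 0 := by rintro rfl; exact hn0 (Nat.eq_zero_of_zero_dvd hdn)
    exact (Nat.mul_lt_mul_right (Nat.pos_of_ne_zero hd0)).mpr hn
  have h3 : sigma' d * n < 2 * d * n := by
    calc sigma' d * n ≤ sigma' n * d := h1
      _ < 2 * n * d := h2
      _ = 2 * d * n := by ring
  exact Nat.lt_of_mul_lt_mul_right h3

theorem primitive_abundant_of_deficient_mul_prime (m q w : ℕ)
    (hw : w = m * q) (habw : Abundant w)
    (hm : Deficient m) (hq : q.Prime) (hqm : ¬ q ∣ m)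
    (hbig : ∀ p α : ℕ, p.Prime → p ^ α ∣ m → ¬ p ^ (α + 1) ∣ m →
      sigma' (p ^ α) - 1 ≤ q) :
    Abundant w ∧ ∀ d ∈ w.properDivisors, Deficient d := by
  refine ⟨habw, ?_⟩
  intro d hd
  rw [Nat.mem_properDivisors] at hd
  obtain ⟨hdvd, hlt⟩ := hd
  have hw0 : w ≠ 0 := by
    rintro rfl; simp [Abundant, sigma'] at habw
  have hm0 : m ≠ 0 := by rintro rfl; exact hw0 (by simp [hw])
  by_cases hqd : q ∣ d
  case neg =>
    have hcop : d.Coprime q := ((hq.coprime_iff_not_dvd.mpr hqd)).symm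
    have hdm : d ∣ m := hcop.dvd_of_dvd_mul_right (hw ▸ hdvd)
    exact deficient_of_dvd hdm hm
  case pos =>
    obtain ⟨d', rfl⟩ := hqd
    have hd'm : d' ∣ m := by
      have h : q * d' ∣ q * m := by rw [hw, mul_comm m q] at hdvd; exact hdvd
      exact (mul_dvd_mul_iff_left hq.ne_zero).mp h
    have hd'0 : d' ≠ 0 := by rintro rfl; exact hm0 (Nat.eq_zero_of_zero_dvd hd'm)
    have hd'lt : d' < m := by
      rw [hw, mul_comm m q] at hlt
      exact lt_of_mul_lt_mul_left hlt (Nat.zero_le q)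
    obtain ⟨k, hk⟩ := hd'm
    have hk0 : k ≠ 0 := by rintro rfl; rw [mul_zero] at hk; exact hm0 hk
    have hk1 : k ≠ 1 := by rintro rfl; rw [mul_one] at hk; omega
    set p := k.minFac with hpdef
    have hp : p.Prime := Nat.minFac_prime hk1
    have hpk : p ∣ k := Nat.minFac_dvd k
    set α := m.factorization p with hαdef
    set β := d'.factorization p with hβdef
    have hβα : β < α := by
      have hfac : m.factorization = d'.factorization + k.factorization := by
        rw [hk, Nat.factorization_mul hd'0 hk0]
      have hkp : 0 < k.factorization p := hp.factorization_pos_of_dvd hk0 hpk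
      have : α = β + k.factorization p := by rw [hαdef, hfac]; simp; rfl
      omega
    have hpα : p ^ α ∣ m := Nat.ordProj_dvd m p
    have hnpα : ¬ p ^ (α + 1) ∣ m := Nat.pow_succ_factorization_not_dvd hm0 hp
    have hbq : sigma' (p ^ α) - 1 ≤ q := hbig p α hp hpα hnpα
    -- decompose m and d'
    set m' := m / p ^ α with hm'def
    have hm' : p ^ α * m' = m := Nat.ordProj_mul_ordCompl_eq_self m p
    have hcpm' : Nat.Coprime p m' := Nat.coprime_ordCompl hp hm0
    set e := d' / p ^ β with hedef
    have he : p ^ β * e = d' := Nat.ordProj_mul_ordCompl_eq_self d' p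
    have hpe : Nat.Coprime p e := Nat.coprime_ordCompl hp hd'0
    have hed' : e ∣ d' := Nat.ordCompl_dvd d' p
    have hem' : e ∣ m' := by
      have h1 : e ∣ p ^ α * m' := hm' ▸ hed'.trans ⟨k, hk⟩
      exact ((hpe.pow_left α).symm).dvd_of_dvd_mul_left h1
    have hm'0 : m' ≠ 0 := by
      rintro h; rw [h, mul_zero] at hm'; exact hm0 hm'.symm
    have he0 : e ≠ 0 := by rintro h; rw [h, mul_zero] at he; exact hd'0 he.symm
    -- sigma values
    have hqd' : ¬ q ∣ d' := fun h => hqm (h.trans ⟨k, hk⟩)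
    have hσd : sigma' (q * d') = (q + 1) * sigma' d' := by
      rw [sigma'_mul (hq.coprime_iff_not_dvd.mpr hqd'), sigma'_prime hq]
    have hσd' : sigma' d' = sigma' (p ^ β) * sigma' e := by
      rw [← he, sigma'_mul (hpe.pow_left β)]
    have hσm : sigma' m = sigma' (p ^ α) * sigma' m' := by
      rw [← hm', sigma'_mul (hcpm'.pow_left α)]
    -- key inequalities
    have h1 : sigma' e * m' ≤ sigma' m' * e := sigma'_dvd_mono hem' hm'0
    have h2 : sigma' (p ^ α) * sigma' m' < 2 * (p ^ α * m') := by
      rw [← hσm, hm']; exact hm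
    obtain ⟨γ, hγ⟩ : ∃ γ, α = γ + 1 := ⟨α - 1, by omega⟩
    rw [hγ] at h2 hbq
    have hs : sigma' (p ^ (γ + 1)) = p * sigma' (p ^ γ) + 1 :=
      sigma'_prime_pow_succ hp γ
    have hpt : p * sigma' (p ^ γ) ≤ q := by rw [hs] at hbq; omega
    have hmono : sigma' (p ^ β) * p ^ γ ≤ sigma' (p ^ γ) * p ^ β :=
      sigma'_dvd_mono (pow_dvd_pow p (show β ≤ γ by omega)) (pow_ne_zero γ hp.ne_zero)
    have h3 : sigma' (p ^ β) * p ^ (γ + 1) * (q + 1)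
        ≤ p ^ β * sigma' (p ^ (γ + 1)) * q := by
      calc sigma' (p ^ β) * p ^ (γ + 1) * (q + 1)
          = (sigma' (p ^ β) * p ^ γ) * (p * (q + 1)) := by ring
        _ ≤ (sigma' (p ^ γ) * p ^ β) * (p * (q + 1)) := Nat.mul_le_mul_right _ hmono
        _ = p ^ β * (p * sigma' (p ^ γ) * (q + 1)) := by ring
        _ ≤ p ^ β * ((p * sigma' (p ^ γ) + 1) * q) := Nat.mul_le_mul_left _ (by nlinarith)
        _ = p ^ β * sigma' (p ^ (γ + 1)) * q := by rw [hs]; ring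
    -- combine
    have hpos : 0 < p ^ β * e * q :=
      Nat.mul_pos (Nat.mul_pos (pow_pos hp.pos β) (Nat.pos_of_ne_zero he0)) hq.pos
    have main : sigma' (q * d') * (p ^ (γ + 1) * m')
        < 2 * (q * d') * (p ^ (γ + 1) * m') := by
      calc sigma' (q * d') * (p ^ (γ + 1) * m')
          = (sigma' (p ^ β) * p ^ (γ + 1) * (q + 1)) * (sigma' e * m') := by
            rw [hσd, hσd']; ring
        _ ≤ (p ^ β * sigma' (p ^ (γ + 1)) * q) * (sigma' m' * e) :=
            Nat.mul_le_mul h3 h1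
        _ = (sigma' (p ^ (γ + 1)) * sigma' m') * (p ^ β * e * q) := by ring
        _ < (2 * (p ^ (γ + 1) * m')) * (p ^ β * e * q) :=
            (Nat.mul_lt_mul_right hpos).mpr h2
        _ = 2 * (q * d') * (p ^ (γ + 1) * m') := by rw [← he]; ring
    exact Nat.lt_of_mul_lt_mul_right main
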